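/- Let F : ℝ^n → ℝ be a bounded smooth function which is equal to 1 on some neighborhood of the origin. For ℏ ∈ [0,1] define b_ℏ : ℝ^n → ℝ by b_ℏ(x) = F(ℏ·x). Then for every a ∈ C₀(ℝ^n), the map ℏ ↦ (x ↦ b_ℏ(x)²·a(x)) from [0,1] to C₀(ℝ^n) is continuous with respect to the supremum norm. -/

import Mathlib

open scoped ZeroAtInfty

theorem continuity_of_dilated_field_sections
    {n : ℕ} (F : EuclideanSpace ℝ (Fin n) → ℝ)
    (hF : ContDiff ℝ (⊤ : ℕ∞) F) (hbd : ∃ C : ℝ, ∀ x, |F x| ≤ C)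
    (hnbhd : ∀ᶠ x in nhds (0 : EuclideanSpace ℝ (Fin n)), F x = 1) :
    ∀ (a : C₀(EuclideanSpace ℝ (Fin n), ℂ))
      (G : Set.Icc (0 : ℝ) 1 → C₀(EuclideanSpace ℝ (Fin n), ℂ)),
      (∀ (ℏ : Set.Icc (0 : ℝ) 1) x, G ℏ x = (↑(F ((ℏ : ℝ) • x)) : ℂ) ^ 2 * a x) →
      Continuous G := by
  intro a G hG
  obtain ⟨C₀, hC₀⟩ := hbd
  set C : ℝ := max C₀ 1 with hCdef
  have hC1 : (1 : ℝ) ≤ C := le_max_right _ _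
  have hCpos : (0 : ℝ) < C := lt_of_lt_of_le one_pos hC1
  have hFC : ∀ x, |F x| ≤ C := fun x => (hC₀ x).trans (le_max_left _ _)
  have hFcont : Continuous F := hF.continuous
  set M : ℝ := ‖a‖ + 1 with hMdef
  have hM : (0 : ℝ) < M := by positivity
  have haM : ∀ x, ‖a x‖ ≤ M := by
    intro x
    have h1 : ‖a x‖ ≤ ‖a.toBCF‖ := a.toBCF.norm_coe_le_norm x
    rw [ZeroAtInftyContinuousMap.norm_toBCF_eq_norm] at h1
    linarith
  have key : ∀ (u v : ℝ) (z : ℂ),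
      dist ((u : ℂ) ^ 2 * z) ((v : ℂ) ^ 2 * z) = |u ^ 2 - v ^ 2| * ‖z‖ := by
    intro u v z
    rw [dist_eq_norm, ← sub_mul, norm_mul]
    congr 1
    rw [show ((u : ℂ) ^ 2 - (v : ℂ) ^ 2) = (((u ^ 2 - v ^ 2 : ℝ)) : ℂ) by push_cast; ring,
      Complex.norm_real, Real.norm_eq_abs]
  rw [continuous_iff_continuousAt]
  intro ℏ₀
  have : Filter.Tendsto G (nhds ℏ₀) (nhds (G ℏ₀)) := by
    rw [ZeroAtInftyContinuousMap.tendsto_iff_tendstoUniformly, Metric.tendstoUniformly_iff]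
    intro ε hε
    -- tail set
    have hδpos : (0 : ℝ) < ε / (4 * C ^ 2) := by positivity
    have hmem : ∀ᶠ x in Filter.cocompact (EuclideanSpace ℝ (Fin n)),
        ‖a x‖ < ε / (4 * C ^ 2) := by
      have := Metric.tendsto_nhds.mp (a.zero_at_infty') _ hδpos
      simpa [dist_zero_right] using this
    obtain ⟨K, hK, hKsub⟩ := Filter.mem_cocompact.mp hmem
    -- on K
    have hcomp : ∀ᶠ ℏ : Set.Icc (0:ℝ) 1 in nhds ℏ₀, ∀ x ∈ K,
        |F ((ℏ : ℝ) • x) ^ 2 - F ((ℏ₀ : ℝ) • x) ^ 2| < ε / (2 * M) := by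
      apply hK.eventually_forall_of_forall_eventually
      intro y _
      have hcont : Continuous (fun p : Set.Icc (0 : ℝ) 1 × EuclideanSpace ℝ (Fin n) =>
          |F ((p.1 : ℝ) • p.2) ^ 2 - F ((ℏ₀ : ℝ) • p.2) ^ 2|) := by
        apply Continuous.abs
        exact ((hFcont.comp
            (((continuous_subtype_val.comp continuous_fst).smul continuous_snd))).pow 2).sub
          ((hFcont.comp (continuous_snd.const_smul (ℏ₀ : ℝ))).pow 2)
      have htend := hcont.tendsto (ℏ₀, y)
      have hzero : |F ((ℏ₀ : ℝ) • y) ^ 2 - F ((ℏ₀ : ℝ) • y) ^ 2| = 0 := by simp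
      rw [hzero] at htend
      have := htend.eventually_lt_const (by positivity : (0:ℝ) < ε / (2 * M))
      exact this
    filter_upwards [hcomp] with ℏ hℏ
    intro x
    rw [hG, hG, key]
    by_cases hx : x ∈ K
    · have h1 := hℏ x hx
      have h2 : |F ((ℏ₀ : ℝ) • x) ^ 2 - F ((ℏ : ℝ) • x) ^ 2| < ε / (2 * M) := by
        rw [abs_sub_comm]; exact h1
      calc |F ((ℏ₀ : ℝ) • x) ^ 2 - F ((ℏ : ℝ) • x) ^ 2| * ‖a x‖
          ≤ |F ((ℏ₀ : ℝ) • x) ^ 2 - F ((ℏ : ℝ) • x) ^ 2| * M :=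
            mul_le_mul_of_nonneg_left (haM x) (abs_nonneg _)
        _ < (ε / (2 * M)) * M := by
            exact mul_lt_mul_of_pos_right h2 hM
        _ = ε / 2 := by field_simp
        _ < ε := by linarith
    · have h1 : ‖a x‖ < ε / (4 * C ^ 2) := hKsub hx
      have h2 : |F ((ℏ₀ : ℝ) • x) ^ 2 - F ((ℏ : ℝ) • x) ^ 2| ≤ 2 * C ^ 2 := by
        have b1 := hFC ((ℏ₀ : ℝ) • x)
        have b2 := hFC ((ℏ : ℝ) • x)
        have a1 := abs_nonneg (F ((ℏ₀ : ℝ) • x))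
        have a2 := abs_nonneg (F ((ℏ : ℝ) • x))
        have := abs_sub (F ((ℏ₀ : ℝ) • x) ^ 2) (F ((ℏ : ℝ) • x) ^ 2)
        nlinarith [abs_pow (F ((ℏ₀ : ℝ) • x)) 2, abs_pow (F ((ℏ : ℝ) • x)) 2,
          mul_le_mul b1 b1 a1 hCpos.le, mul_le_mul b2 b2 a2 hCpos.le]
      calc |F ((ℏ₀ : ℝ) • x) ^ 2 - F ((ℏ : ℝ) • x) ^ 2| * ‖a x‖
          ≤ (2 * C ^ 2) * ‖a x‖ := mul_le_mul_of_nonneg_right h2 (norm_nonneg _)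
        _ < (2 * C ^ 2) * (ε / (4 * C ^ 2)) :=
            mul_lt_mul_of_pos_left h1 (by positivity)
        _ = ε / 2 := by field_simp; ring
        _ < ε := by linarith
  exact this
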